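/- Let μ be any probability distribution on {0,1}^n, let A, B be disjoint subsets of sites, let i be a site, let p ∈ [0,1], and let ν be the distribution obtained from μ by one noise update N_i with parameter p. Then V_{A,B}(ν) = (1−p)^{2k} · V_{A,B}(μ), where k = 1 if i ∈ A ∪ B and k = 0 otherwise. In particular, if V_{A,B}(μ) ≥ 0 then V_{A,B}(ν) ≥ 0. -/

import Mathlib

open Finset

variable {n : ℕ}

/-- Transition kernel of the gate update `G_{α,β}`: the pair `(x α, x β)` goes
`(0,0) → (0,0)` and `(1,1) → (1,1)` with probability `1`, while `(0,1)` or `(1,0)`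
go to `(0,0)` with probability `1/5` and to `(1,1)` with probability `4/5`;
all other coordinates are unchanged. -/
noncomputable def gateKernel (α β : Fin n) (x y : Fin n → Bool) : ℝ :=
  if ∀ i, i ≠ α → i ≠ β → y i = x i then
    (if x α = x β then (if y α = x α ∧ y β = x β then 1 else 0)
     else if y α = false ∧ y β = false then 1 / 5
     else if y α = true ∧ y β = true then 4 / 5
     else 0)
  else 0

/-- One gate update `G_{α,β}` applied to a distribution `μ` on `{0,1}^n`. -/
noncomputable def gateUpdate (α β : Fin n) (μ : (Fin n → Bool) → ℝ) : (Fin n → Bool) → ℝ :=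
  fun y => ∑ x : Fin n → Bool, μ x * gateKernel α β x y

/-- Transition kernel of the noise update `N_i` with parameter `p`: coordinate
`x i` goes `0 → 0` with probability `(1-p)²`, `0 → 1` with probability `2p - p²`,
`1 → 1` with probability `1`; all other coordinates are unchanged. -/
noncomputable def noiseKernel (i : Fin n) (p : ℝ) (x y : Fin n → Bool) : ℝ :=
  if ∀ k, k ≠ i → y k = x k then
    (if x i = true then (if y i = true then 1 else 0)
     else if y i = false then (1 - p) ^ 2 else 2 * p - p ^ 2)
  else 0

/-- One noise update `N_i` with parameter `p` applied to a distribution `μ`. -/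
noncomputable def noiseUpdate (i : Fin n) (p : ℝ) (μ : (Fin n → Bool) → ℝ) : (Fin n → Bool) → ℝ :=
  fun y => ∑ x : Fin n → Bool, μ x * noiseKernel i p x y

/-- `μ(Q_S = 0)`: the probability, under `μ`, that all qubits in `S` carry no error. -/
noncomputable def probZero (μ : (Fin n → Bool) → ℝ) (S : Finset (Fin n)) : ℝ :=
  ∑ x : Fin n → Bool, if ∀ i ∈ S, x i = false then μ x else 0


/-- `V_{A,B}(μ) = μ(Q_{A∪B} = 0) − μ(Q_A = 0)·μ(Q_B = 0)` for disjoint `A, B`. -/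
noncomputable def Vcorr (μ : (Fin n → Bool) → ℝ) (A B : Finset (Fin n)) : ℝ :=
  probZero μ (A ∪ B) - probZero μ A * probZero μ B

/-- **Noise step of the inductive proof of Lemma 1.** For any probability
distribution `μ` on `{0,1}^n`, disjoint site subsets `A, B`, a site `i`, and
`p ∈ [0,1]`, one noise update `N_i` with parameter `p` satisfies
`V_{A,B}(ν) = (1−p)^{2k} V_{A,B}(μ)` where `k = 1` if `i ∈ A ∪ B` and `k = 0`
otherwise; in particular `V_{A,B}(μ) ≥ 0` implies `V_{A,B}(ν) ≥ 0`. -/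
lemma probZero_noiseUpdate (μ : (Fin n → Bool) → ℝ) (i : Fin n) (p : ℝ)
    (S : Finset (Fin n)) :
    probZero (noiseUpdate i p μ) S
      = (if i ∈ S then (1 - p) ^ 2 else 1) * probZero μ S := by
  unfold probZero noiseUpdate
  rw [Finset.mul_sum]
  have step : ∀ y : Fin n → Bool,
      (if ∀ j ∈ S, y j = false then ∑ x : Fin n → Bool, μ x * noiseKernel i p x y else 0)
        = ∑ x : Fin n → Bool,
            (if ∀ j ∈ S, y j = false then μ x * noiseKernel i p x y else 0) := by
    intro y; split <;> simp
  simp_rw [step]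
  rw [Finset.sum_comm]
  refine Finset.sum_congr rfl ?_
  intro x _
  set u0 := Function.update x i false with hu0
  set u1 := Function.update x i true with hu1
  have hne : u0 ≠ u1 := by
    intro h
    have := congrFun h i
    simp [hu0, hu1] at this
  have hkey : ∀ y : Fin n → Bool, y ∉ ({u0, u1} : Finset (Fin n → Bool)) →
      noiseKernel i p x y = 0 := by
    intro y hy
    rw [noiseKernel]
    rw [if_neg]
    intro hall
    apply hy
    have : y = Function.update x i (y i) := by
      funext k
      by_cases hk : k = i
      · subst hk; simp
      · rw [Function.update_of_ne hk]; exact hall k hk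
    rcases Bool.eq_false_or_eq_true (y i) with h | h
    · rw [h] at this; simp [this, hu0, hu1]
    · rw [h] at this; simp [this, hu1, hu0]
  have hsum : (∑ y : Fin n → Bool,
      (if ∀ j ∈ S, y j = false then μ x * noiseKernel i p x y else 0))
      = ∑ y ∈ ({u0, u1} : Finset (Fin n → Bool)),
          (if ∀ j ∈ S, y j = false then μ x * noiseKernel i p x y else 0) := by
    refine (Finset.sum_subset (Finset.subset_univ _) ?_).symm
    intro y _ hy
    rw [hkey y hy]
    simp
  rw [hsum, Finset.sum_pair hne]
  have hk0 : noiseKernel i p x u0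
      = if x i = true then 0 else (1 - p) ^ 2 := by
    rw [noiseKernel, if_pos]
    · simp [hu0]
    · intro k hk; simp [hu0, Function.update_of_ne hk]
  have hk1 : noiseKernel i p x u1
      = if x i = true then 1 else 2 * p - p ^ 2 := by
    rw [noiseKernel, if_pos]
    · simp [hu1]
    · intro k hk; simp [hu1, Function.update_of_ne hk]
  by_cases hi : i ∈ S
  · rw [if_pos hi]
    have hP1 : ¬ (∀ j ∈ S, u1 j = false) := by
      intro h
      have := h i hi
      simp [hu1] at this
    rw [if_neg hP1, add_zero]
    rcases Bool.eq_false_or_eq_true (x i) with hx | hx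
    · -- x i = true
      have hPx : ¬ (∀ j ∈ S, x j = false) := by
        intro h; have := h i hi; rw [hx] at this; simp at this
      rw [if_neg hPx, hk0, if_pos hx]
      split <;> ring
    · -- x i = false
      have hP0 : (∀ j ∈ S, u0 j = false) ↔ (∀ j ∈ S, x j = false) := by
        constructor
        · intro h j hj
          by_cases hji : j = i
          · subst hji; exact hx
          · have := h j hj; rwa [hu0, Function.update_of_ne hji] at this
        · intro h j hj
          by_cases hji : j = i
          · subst hji; simp [hu0]
          · rw [hu0, Function.update_of_ne hji]; exact h j hj
      rw [hk0, if_neg (show ¬ x i = true by simp [hx])]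
      by_cases hPx : ∀ j ∈ S, x j = false
      · rw [if_pos (hP0.mpr hPx), if_pos hPx]; ring
      · rw [if_neg (fun h => hPx (hP0.mp h)), if_neg hPx]; ring
  · rw [if_neg hi]
    have hP : ∀ b : Bool, (∀ j ∈ S, Function.update x i b j = false)
        ↔ (∀ j ∈ S, x j = false) := by
      intro b
      constructor
      · intro h j hj
        have hji : j ≠ i := fun e => hi (e ▸ hj)
        have := h j hj; rwa [Function.update_of_ne hji] at this
      · intro h j hj
        have hji : j ≠ i := fun e => hi (e ▸ hj)
        rw [Function.update_of_ne hji]; exact h j hj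
    rw [hk0, hk1]
    by_cases hPx : ∀ j ∈ S, x j = false
    · rw [if_pos ((hP false).mpr hPx), if_pos ((hP true).mpr hPx), if_pos hPx]
      rcases Bool.eq_false_or_eq_true (x i) with hx | hx <;>
        simp only [hx] <;> simp <;> ring
    · rw [if_neg (fun h => hPx ((hP false).mp h)),
        if_neg (fun h => hPx ((hP true).mp h)), if_neg hPx]
      ring

theorem Vcorr_noiseUpdate
    (μ : (Fin n → Bool) → ℝ) (hμ0 : ∀ x, 0 ≤ μ x) (hμ1 : ∑ x : Fin n → Bool, μ x = 1)
    (A B : Finset (Fin n)) (hAB : Disjoint A B)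
    (i : Fin n) (p : ℝ) (hp0 : 0 ≤ p) (hp1 : p ≤ 1) :
    Vcorr (noiseUpdate i p μ) A B
        = (1 - p) ^ (2 * (if i ∈ A ∪ B then 1 else 0)) * Vcorr μ A B
      ∧ (0 ≤ Vcorr μ A B → 0 ≤ Vcorr (noiseUpdate i p μ) A B) := by
  have hmain : Vcorr (noiseUpdate i p μ) A B
      = (1 - p) ^ (2 * (if i ∈ A ∪ B then 1 else 0)) * Vcorr μ A B := by
    unfold Vcorr
    rw [probZero_noiseUpdate, probZero_noiseUpdate, probZero_noiseUpdate]
    by_cases hiAB : i ∈ A ∪ B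
    · rw [if_pos hiAB, if_pos hiAB]
      rcases Finset.mem_union.mp hiAB with hiA | hiB
      · have hiB : i ∉ B := Finset.disjoint_left.mp hAB hiA
        rw [if_pos hiA, if_neg hiB]; ring
      · have hiA : i ∉ A := Finset.disjoint_right.mp hAB hiB
        rw [if_pos hiB, if_neg hiA]; ring
    · have hiA : i ∉ A := fun h => hiAB (Finset.mem_union_left _ h)
      have hiB : i ∉ B := fun h => hiAB (Finset.mem_union_right _ h)
      rw [if_neg hiAB, if_neg hiAB, if_neg hiA, if_neg hiB]; ring
  refine ⟨hmain, fun hV => ?_⟩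
  rw [hmain]
  exact mul_nonneg (pow_nonneg (by linarith) _) hV
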